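/- Let u ∈ {0,1}^ℤ satisfy π(σ^n u) ∉ Δ for all n ∈ ℤ. Then either u is eventually periodic in both directions (there exist p ≥ 1 and N ∈ ℤ with u_{n+p} = u_n for all n ≥ N, and there exist q ≥ 1 and M ∈ ℤ with u_{n−q} = u_n for all n ≤ M), or the orbit {π(σ^n u) : n ∈ ℤ} comes arbitrarily close to (0,1/2) or to (1/2,1): for every ε > 0 there exists n ∈ ℤ with ‖π(σ^n u) − (0,1/2)‖ < ε or ‖π(σ^n u) − (1/2,1)‖ < ε. -/

import Mathlib

open MeasureTheory

noncomputable section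

/-- Real value of a bit. -/
def bval (b : Bool) : ℝ := if b then 1 else 0

/-- The unit square `X = [0,1) × [0,1)`. -/
def bakerX : Set (ℝ × ℝ) := Set.Ico (0:ℝ) 1 ×ˢ Set.Ico (0:ℝ) 1

/-- The baker's map. -/
def baker (p : ℝ × ℝ) : ℝ × ℝ :=
  if p.1 < 1/2 then (2 * p.1, p.2 / 2) else (2 * p.1 - 1, (p.2 + 1) / 2)

/-- Inverse of the baker's map (on `X`). -/
def bakerInv (p : ℝ × ℝ) : ℝ × ℝ :=
  if p.2 < 1/2 then (p.1 / 2, 2 * p.2) else ((p.1 + 1) / 2, 2 * p.2 - 1)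

/-- `B^n` for `n : ℤ`. -/
def bakerIter (n : ℤ) : (ℝ × ℝ) → (ℝ × ℝ) :=
  if 0 ≤ n then baker^[n.toNat] else bakerInv^[(-n).toNat]

/-- Survivor set of a hole `H`. -/
def survivor (H : Set (ℝ × ℝ)) : Set (ℝ × ℝ) :=
  {p | p ∈ bakerX ∧ ∀ n : ℤ, bakerIter n p ∉ H}

/-- The coding map `π`. -/
def pibar (u : ℤ → Bool) : ℝ × ℝ :=
  (∑' n : ℕ, bval (u ((n : ℤ) + 1)) / 2 ^ (n + 1),
   ∑' n : ℕ, bval (u (-(n : ℤ))) / 2 ^ (n + 1))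

/-- `σ^n` for `n : ℤ`. -/
def shiftIter (n : ℤ) (u : ℤ → Bool) : ℤ → Bool := fun m => u (m + n)

/-- The open quadrilateral `Δ` with vertices `(0,1), (1/2,1), (1/3,2/3), (0,1/2)`. -/
def Delta : Set (ℝ × ℝ) :=
  {p | 0 < p.1 ∧ p.2 < 1 ∧ 2 * p.1 < p.2 ∧ (p.1 + 1) / 2 < p.2}

/-- The open quadrilateral `Δ'` with vertices `(0,1/2), (5/24,2/3), (1/2,1), (0,1)`. -/
def Delta' : Set (ℝ × ℝ) :=
  {p | 0 < p.1 ∧ p.2 < 1 ∧ (8 * p.1 + 5) / 10 < p.2 ∧ (8 * p.1 + 3) / 7 < p.2}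

/-- The open quadrilateral `Δ''` with vertices `(0,1/2), (1/3,19/24), (1/2,1), (0,1)`. -/
def Delta'' : Set (ℝ × ℝ) :=
  {p | 0 < p.1 ∧ p.2 < 1 ∧ (7 * p.1 + 4) / 8 < p.2 ∧ (10 * p.1 + 3) / 8 < p.2}


lemma bval_nonneg (b : Bool) : 0 ≤ bval b := by cases b <;> simp [bval]
lemma bval_le_one (b : Bool) : bval b ≤ 1 := by cases b <;> simp [bval]

def val (b : ℕ → Bool) : ℝ := ∑' n : ℕ, bval (b n) / 2 ^ (n + 1)

lemma term_nonneg (b : Bool) (n : ℕ) : (0:ℝ) ≤ bval b / 2 ^ (n+1) :=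
  div_nonneg (bval_nonneg b) (by positivity)

lemma term_le (b : Bool) (n : ℕ) : bval b / 2 ^ (n+1) ≤ (1/2:ℝ) ^ (n+1) := by
  have h2 : (0:ℝ) < 2 ^ (n+1) := by positivity
  rw [div_le_iff₀ h2, div_pow, one_pow, div_mul_eq_mul_div, one_mul,
    div_self (ne_of_gt h2)]
  exact bval_le_one b

lemma geom_summable : Summable (fun n : ℕ => (1/2:ℝ)^(n+1)) := by
  have := (summable_geometric_two).mul_left (1/2:ℝ)
  exact this.congr (fun n => by rw [pow_succ]; ring)

lemma geom_tsum : ∑' n : ℕ, (1/2:ℝ)^(n+1) = 1 := by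
  have h : ∀ n : ℕ, (1/2:ℝ)^(n+1) = 1/2/2^n := by
    intro n; rw [pow_succ, div_pow, one_pow]; ring
  calc ∑' n : ℕ, (1/2:ℝ)^(n+1) = ∑' n : ℕ, (1:ℝ)/2/2^n := tsum_congr h
  _ = 1 := tsum_geometric_two' 1

lemma val_summable (b : ℕ → Bool) : Summable (fun n : ℕ => bval (b n) / 2 ^ (n + 1)) :=
  Summable.of_nonneg_of_le (fun n => term_nonneg _ n) (fun n => term_le (b n) n)
    geom_summable

lemma val_nonneg (b : ℕ → Bool) : 0 ≤ val b :=
  tsum_nonneg (fun n => term_nonneg _ n)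

lemma val_le_one (b : ℕ → Bool) : val b ≤ 1 := by
  have h : val b ≤ ∑' n : ℕ, (1/2:ℝ)^(n+1) :=
    Summable.tsum_le_tsum (fun n => term_le (b n) n) (val_summable b) geom_summable
  rwa [geom_tsum] at h


/-- prefix sum -/
def pre (m : ℕ) (b : ℕ → Bool) : ℝ := ∑ k ∈ Finset.range m, bval (b k) / 2 ^ (k+1)

lemma pre_nonneg (m : ℕ) (b : ℕ → Bool) : 0 ≤ pre m b :=
  Finset.sum_nonneg (fun k _ => term_nonneg _ k)

lemma pre_le (m : ℕ) (b : ℕ → Bool) : pre m b ≤ 1 - (1/2:ℝ)^m := by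
  induction m with
  | zero => simp [pre]
  | succ m ih =>
    have hps : pre (m+1) b = pre m b + bval (b m) / 2^(m+1) :=
      Finset.sum_range_succ _ _
    rw [hps]
    have hp : (1/2:ℝ)^(m+1) = (1/2)^m * (1/2) := by ring
    nlinarith [term_le (b m) m, ih]

def shf (b : ℕ → Bool) (m : ℕ) : ℕ → Bool := fun n => b (n + m)

lemma shf_shf (b : ℕ → Bool) (m : ℕ) : shf (shf b m) 1 = shf b (m+1) := by
  funext n; simp only [shf]; congr 1; omega

lemma shf_zero (b : ℕ → Bool) : shf b 0 = b := by funext n; simp [shf]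

lemma val_eq (b : ℕ → Bool) : val b = bval (b 0) / 2 + (1/2) * val (shf b 1) := by
  have h2 : (1/2:ℝ) * val (shf b 1) = ∑' n : ℕ, bval (b (n+1)) / 2^(n+1+1) := by
    rw [val, ← tsum_mul_left]
    exact tsum_congr (fun n => by simp only [shf]; rw [pow_succ]; ring)
  rw [val, Summable.tsum_eq_zero_add (val_summable b), h2]
  norm_num

lemma val_split (m : ℕ) (b : ℕ → Bool) :
    val b = pre m b + (1/2:ℝ)^m * val (shf b m) := by
  induction m with
  | zero => simp [pre, shf_zero]
  | succ m ih =>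
    rw [ih, val_eq (shf b m)]
    have hps : pre (m+1) b = pre m b + bval (b m) / 2^(m+1) :=
      Finset.sum_range_succ _ _
    have h0 : shf b m 0 = b m := by simp [shf]
    rw [hps, shf_shf, h0, pow_succ]
    simp only [one_div, inv_pow]
    ring

lemma val_le_half (b : ℕ → Bool) (hk : b 0 = false) : val b ≤ 1/2 := by
  rw [val_eq, hk]
  have := val_le_one (shf b 1)
  simp [bval]
  linarith

lemma val_ge_half (b : ℕ → Bool) (hk : b 0 = true) : 1/2 ≤ val b := by
  rw [val_eq, hk]
  have := val_nonneg (shf b 1)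
  simp [bval]
  linarith

lemma val_lt_one (b : ℕ → Bool) (k : ℕ) (hk : b k = false) : val b ≤ 1 - (1/2:ℝ)^(k+1) := by
  have h := val_split k b
  have h2 : val (shf b k) ≤ 1/2 := val_le_half _ (by simp [shf, hk])
  have hp := pre_le k b
  have hpow : (0:ℝ) < (1/2:ℝ)^k := by positivity
  rw [h]
  have he : (1/2:ℝ)^(k+1) = (1/2)^k * (1/2) := by ring
  nlinarith

lemma val_ge_of_true (b : ℕ → Bool) (k : ℕ) (hk : b k = true) : (1/2:ℝ)^(k+1) ≤ val b := by
  have h := val_split k b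
  have h2 : 1/2 ≤ val (shf b k) := val_ge_half _ (by simp [shf, hk])
  have hp := pre_nonneg k b
  have hpow : (0:ℝ) < (1/2:ℝ)^k := by positivity
  rw [h]
  have he : (1/2:ℝ)^(k+1) = (1/2)^k * (1/2) := by ring
  nlinarith

lemma val_pos_of_true (b : ℕ → Bool) (k : ℕ) (hk : b k = true) : 0 < val b :=
  lt_of_lt_of_le (by positivity) (val_ge_of_true b k hk)

lemma val_lt_one' (b : ℕ → Bool) (k : ℕ) (hk : b k = false) : val b < 1 := by
  have h1 := val_lt_one b k hk
  have : (0:ℝ) < (1/2:ℝ)^(k+1) := by positivity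
  linarith

lemma pre_all_false (m : ℕ) (b : ℕ → Bool) (h : ∀ k, k < m → b k = false) : pre m b = 0 := by
  unfold pre
  apply Finset.sum_eq_zero
  intro k hk
  rw [h k (Finset.mem_range.mp hk)]
  simp [bval]

lemma pre_all_true (m : ℕ) (b : ℕ → Bool) (h : ∀ k, k < m → b k = true) :
    pre m b = 1 - (1/2:ℝ)^m := by
  induction m with
  | zero => simp [pre]
  | succ m ih =>
    have hps : pre (m+1) b = pre m b + bval (b m) / 2^(m+1) :=
      Finset.sum_range_succ _ _
    rw [hps, ih (fun k hk => h k (by omega)), h m (by omega)]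
    have : bval true = 1 := rfl
    rw [this]
    simp only [div_pow, one_pow]
    have h2 : ((2:ℝ))^(m+1) = 2^m * 2 := by ring
    rw [h2]
    have h3 : ((2:ℝ))^m ≠ 0 := by positivity
    field_simp
    ring

lemma val_not (b : ℕ → Bool) : val (fun n => !(b n)) = 1 - val b := by
  have h : val (fun n => !(b n)) + val b = 1 := by
    unfold val
    rw [← Summable.tsum_add (val_summable _) (val_summable _), ← geom_tsum]
    apply tsum_congr
    intro n
    have hb : bval (!(b n)) + bval (b n) = 1 := by cases b n <;> simp [bval]
    rw [← add_div, hb, div_pow, one_pow]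
  linarith


lemma pibar_eq (u : ℤ → Bool) (a : ℤ) :
    pibar (shiftIter a u) = (val (fun k : ℕ => u (a + 1 + k)), val (fun k : ℕ => u (a - k))) := by
  unfold pibar shiftIter val
  simp only [Prod.mk.injEq]
  constructor
  · apply tsum_congr; intro n
    have : (n : ℤ) + 1 + a = a + 1 + n := by ring
    rw [this]
  · apply tsum_congr; intro n
    have : -(n : ℤ) + a = a - n := by ring
    rw [this]

lemma pow_half_anti {m n : ℕ} (h : m ≤ n) : ((1:ℝ)/2)^n ≤ (1/2)^m :=
  pow_le_pow_of_le_one (by norm_num) (by norm_num) h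

lemma half_pow_pos (n : ℕ) : (0:ℝ) < (1/2)^n := by positivity

/-- Key gap lemma: at a `1` with next gap `g ≥ 3`, the previous gap `d` satisfies `g ≤ d`. -/
lemma lemG (u : ℤ → Bool) (hav : ∀ n : ℤ, pibar (shiftIter n u) ∉ Delta)
    (a : ℤ) (g d : ℕ) (hg : 3 ≤ g) (hd : 1 ≤ d)
    (h0 : u a = true)
    (h1 : ∀ j : ℕ, 1 ≤ j → j < g → u (a + j) = false) (h2 : u (a + g) = true)
    (h3 : ∀ j : ℕ, 1 ≤ j → j < d → u (a - j) = false) (h4 : u (a - d) = true)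
    (h5 : ∃ c, a + g < c ∧ u c = false) (h6 : ∃ b, b < a ∧ u b = false) :
    g ≤ d := by
  by_contra hcon
  push_neg at hcon
  have hdg : d + 1 ≤ g := hcon
  set bx : ℕ → Bool := fun k : ℕ => u (a + 1 + k) with hbx
  set by0 : ℕ → Bool := fun k : ℕ => u (a - k) with hby0
  set x := val bx with hx
  set y := val by0 with hy
  -- x bounds
  have hxsplit := val_split (g-1) bx
  have hpre0 : pre (g-1) bx = 0 := by
    apply pre_all_false
    intro k hk
    have : a + 1 + (k:ℤ) = a + ((k+1 : ℕ) : ℤ) := by push_cast; ring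
    simp only [hbx, this]
    exact h1 (k+1) (by omega) (by omega)
  have ht0 : shf bx (g-1) 0 = true := by
    have : a + 1 + ((0 + (g-1) : ℕ) : ℤ) = a + g := by omega
    simp only [shf, hbx, this]
    exact h2
  obtain ⟨c, hc1, hc2⟩ := h5
  have htfalse : shf bx (g-1) ((c - a - g).toNat) = false := by
    have : a + 1 + (((c - a - g).toNat + (g-1) : ℕ) : ℤ) = c := by omega
    simp only [shf, hbx, this]
    exact hc2
  have hvt1 : 1/2 ≤ val (shf bx (g-1)) := val_ge_half _ ht0
  have hvt2 : val (shf bx (g-1)) < 1 := val_lt_one' _ _ htfalse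
  have hxlow : (1/2:ℝ)^g ≤ x := by
    rw [hx, hxsplit, hpre0]
    have : ((1:ℝ)/2)^g = (1/2)^(g-1) * (1/2) := by
      rw [← pow_succ]; congr 1; omega
    nlinarith [half_pow_pos (g-1)]
  have hxhi : x < (1/2:ℝ)^(g-1) := by
    rw [hx, hxsplit, hpre0]
    nlinarith [half_pow_pos (g-1)]
  -- y decomposition
  have hyeq : y = 1/2 + (1/2) * val (shf by0 1) := by
    rw [hy, val_eq]
    have : by0 0 = true := by simp only [hby0]; simpa using h0
    rw [this]
    norm_num [bval]
  set y' := val (shf by0 1) with hy'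
  have hy'lo : (1/2:ℝ)^d ≤ y' := by
    have hbit : shf by0 1 (d-1) = true := by
      have : a - (((d-1) + 1 : ℕ) : ℤ) = a - d := by omega
      simp only [shf, hby0, this]
      exact h4
    have := val_ge_of_true _ _ hbit
    have he : (d - 1) + 1 = d := by omega
    rwa [he] at this
  have hy'hi : y' < 1 := by
    obtain ⟨b, hb1, hb2⟩ := h6
    apply val_lt_one' _ ((a - 1 - b).toNat)
    have : a - (((a - 1 - b).toNat + 1 : ℕ) : ℤ) = b := by omega
    simp only [shf, hby0, this]
    exact hb2
  have hy'nn : 0 ≤ y' := val_nonneg _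
  -- membership
  apply hav a
  rw [pibar_eq]
  show 0 < x ∧ y < 1 ∧ 2 * x < y ∧ (x + 1)/2 < y
  have hgpow : x < (1/2:ℝ)^2 := lt_of_lt_of_le hxhi (pow_half_anti (by omega))
  have hdpow : ((1:ℝ)/2)^(g-1) ≤ (1/2)^d := pow_half_anti (by omega)
  refine ⟨lt_of_lt_of_le (half_pow_pos g) hxlow, by linarith, ?_, ?_⟩
  · norm_num at hgpow; linarith
  · have : x < y' := lt_of_lt_of_le hxhi (le_trans hdpow hy'lo)
    linarith

/-- Key run lemma: a `1`-run of length `h ≥ 2` followed (after one `0`) by a run of length `h'`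
forces `h ≤ h'`. -/
lemma lemH (u : ℤ → Bool) (hav : ∀ n : ℤ, pibar (shiftIter n u) ∉ Delta)
    (a : ℤ) (h h' : ℕ) (hh : 2 ≤ h) (hh' : 1 ≤ h')
    (hr : ∀ j : ℕ, j < h → u (a - j) = true)
    (hl : u (a - h) = false)
    (hz : u (a + 1) = false)
    (hnr : ∀ j : ℕ, 1 ≤ j → j ≤ h' → u (a + 1 + j) = true)
    (hz2 : u (a + 2 + h') = false)
    (hc : ∃ c, a + 2 + h' < c ∧ u c = false) :
    h ≤ h' := by
  by_contra hcon
  push_neg at hcon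
  have hdg : h' + 1 ≤ h := hcon
  set bx : ℕ → Bool := fun k : ℕ => u (a + 1 + k) with hbx
  set by0 : ℕ → Bool := fun k : ℕ => u (a - k) with hby0
  set x := val bx with hx
  set y := val by0 with hy
  -- y bounds
  have hysplit := val_split h by0
  have hypre : pre h by0 = 1 - (1/2:ℝ)^h := by
    apply pre_all_true
    intro k hk
    simp only [hby0]
    exact hr k hk
  have hT0 : shf by0 h 0 = false := by
    have : a - ((0 + h : ℕ) : ℤ) = a - h := by omega
    simp only [shf, hby0, this]
    exact hl
  have hvT : val (shf by0 h) ≤ 1/2 := val_le_half _ hT0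
  have hvTnn : 0 ≤ val (shf by0 h) := val_nonneg _
  have hylo : 1 - (1/2:ℝ)^h ≤ y := by
    rw [hy, hysplit, hypre]
    nlinarith [half_pow_pos h]
  have hyhi : y ≤ 1 - (1/2:ℝ)^(h+1) := by
    rw [hy, hysplit, hypre]
    have : ((1:ℝ)/2)^(h+1) = (1/2)^h * (1/2) := by rw [pow_succ]
    nlinarith [half_pow_pos h]
  -- x bounds
  have hxeq : x = (1/2) * val (shf bx 1) := by
    rw [hx, val_eq]
    have : bx 0 = false := by
      have : a + 1 + ((0:ℕ):ℤ) = a + 1 := by omega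
      simp only [hbx, this]; exact hz
    rw [this]
    norm_num [bval]
  set B1 := shf bx 1 with hB1
  have hB1bit : ∀ j : ℕ, j < h' → B1 j = true := by
    intro j hj
    have : a + 1 + ((j + 1 : ℕ) : ℤ) = a + 1 + (j+1 : ℕ) := by norm_num
    simp only [hB1, shf, hbx]
    have harg : a + 1 + ((j + 1 : ℕ) : ℤ) = a + 1 + ((j+1:ℕ):ℤ) := rfl
    exact hnr (j+1) (by omega) (by omega)
  have hB1split := val_split h' B1
  have hB1pre : pre h' B1 = 1 - (1/2:ℝ)^h' := pre_all_true _ _ hB1bit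
  have hT10 : shf B1 h' 0 = false := by
    have : a + 1 + ((0 + h' + 1 : ℕ) : ℤ) = a + 2 + h' := by omega
    simp only [hB1, shf, hbx, this]
    exact hz2
  obtain ⟨c, hc1, hc2⟩ := hc
  have hT1eq : val (shf B1 h') = (1/2) * val (shf (shf B1 h') 1) := by
    rw [val_eq, hT10]
    norm_num [bval]
  have hT2f : shf (shf B1 h') 1 ((c - a - 3 - h').toNat) = false := by
    have : a + 1 + ((((c - a - 3 - h').toNat + 1) + h' + 1 : ℕ) : ℤ) = c := by omega
    simp only [shf, hB1, hbx, this]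
    exact hc2
  have hT2 : val (shf (shf B1 h') 1) < 1 := val_lt_one' _ _ hT2f
  have hvT1 : val (shf B1 h') < 1/2 := by rw [hT1eq]; linarith
  have hB1hi : val B1 < 1 - (1/2:ℝ)^(h'+1) := by
    rw [hB1split, hB1pre]
    have : ((1:ℝ)/2)^(h'+1) = (1/2)^h' * (1/2) := by rw [pow_succ]
    nlinarith [half_pow_pos h']
  have hB1lo : 1/2 ≤ val B1 := by
    apply val_ge_half
    have : a + 1 + ((0 + 1 : ℕ) : ℤ) = a + 1 + (1:ℕ) := by norm_num
    simp only [hB1, shf, hbx]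
    exact hnr 1 (by omega) (by omega)
  have hxlo : 1/4 ≤ x := by rw [hxeq]; linarith
  have hxhi : x < 1/2 - (1/2:ℝ)^(h'+2) := by
    rw [hxeq]
    have : ((1:ℝ)/2)^(h'+2) = (1/2) * (1/2)^(h'+1) := by rw [pow_succ]; ring
    linarith
  -- membership
  apply hav a
  rw [pibar_eq]
  show 0 < x ∧ y < 1 ∧ 2 * x < y ∧ (x + 1)/2 < y
  have hp1 : ((1:ℝ)/2)^h ≤ (1/2)^(h'+1) := pow_half_anti (by omega)
  have hp2 : ((1:ℝ)/2)^(h-1) ≤ (1/2)^1 := pow_half_anti (by omega)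
  have hp3 : ((1:ℝ)/2)^h = (1/2)^(h-1) * (1/2) := by
    rw [← pow_succ]; congr 1; omega
  have hp4 : (0:ℝ) < (1/2)^(h+1) := half_pow_pos _
  have hp5 : (0:ℝ) < (1/2)^(h'+2) := half_pow_pos _
  refine ⟨by linarith, by linarith, ?_, ?_⟩
  · have : ((1:ℝ)/2)^(h'+2) = (1/2)^(h'+1) * (1/2) := by rw [pow_succ]
    nlinarith
  · norm_num at hp2
    nlinarith

/-- Closeness to the corner `(1/2, 1)` from a long `1`-run followed by `0` and a long run. -/
lemma lemC2 (u : ℤ → Bool) (a : ℤ) (k : ℕ)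
    (hk0 : ∀ j : ℕ, j ≤ k → u (a - j) = true)
    (h1 : u (a + 1) = false)
    (h2 : ∀ j : ℕ, 1 ≤ j → j ≤ k → u (a + 1 + j) = true) :
    dist (pibar (shiftIter a u)) (((1:ℝ)/2, (1:ℝ))) ≤ (1/2)^(k+1) := by
  set bx : ℕ → Bool := fun k : ℕ => u (a + 1 + k) with hbx
  set by0 : ℕ → Bool := fun k : ℕ => u (a - k) with hby0
  set x := val bx with hx
  set y := val by0 with hy
  have hysplit := val_split (k+1) by0
  have hypre : pre (k+1) by0 = 1 - (1/2:ℝ)^(k+1) :=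
    pre_all_true _ _ (fun j hj => hk0 j (by omega))
  have hyT1 : val (shf by0 (k+1)) ≤ 1 := val_le_one _
  have hyT0 : 0 ≤ val (shf by0 (k+1)) := val_nonneg _
  have hylo : 1 - (1/2:ℝ)^(k+1) ≤ y := by
    rw [hy, hysplit, hypre]; nlinarith [half_pow_pos (k+1)]
  have hyhi : y ≤ 1 := val_le_one _
  have hxeq : x = (1/2) * val (shf bx 1) := by
    rw [hx, val_eq]
    have : bx 0 = false := by
      have h00 : a + 1 + ((0:ℕ):ℤ) = a + 1 := by omega
      simp only [hbx, h00]; exact h1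
    rw [this]
    norm_num [bval]
  set B1 := shf bx 1 with hB1
  have hB1bit : ∀ j : ℕ, j < k → B1 j = true := by
    intro j hj
    simp only [hB1, shf, hbx]
    exact h2 (j+1) (by omega) (by omega)
  have hB1split := val_split k B1
  have hB1pre : pre k B1 = 1 - (1/2:ℝ)^k := pre_all_true _ _ hB1bit
  have hB1T1 : val (shf B1 k) ≤ 1 := val_le_one _
  have hB1T0 : 0 ≤ val (shf B1 k) := val_nonneg _
  have hB1lo : 1 - (1/2:ℝ)^k ≤ val B1 := by
    rw [hB1split, hB1pre]; nlinarith [half_pow_pos k]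
  have hB1hi : val B1 ≤ 1 := val_le_one _
  have hxlo : 1/2 - (1/2:ℝ)^(k+1) ≤ x := by
    rw [hxeq]
    have : ((1:ℝ)/2)^(k+1) = (1/2) * (1/2)^k := by rw [pow_succ]; ring
    linarith
  have hxhi : x ≤ 1/2 := by rw [hxeq]; linarith
  rw [pibar_eq, Prod.dist_eq]
  apply max_le
  · rw [Real.dist_eq, abs_le]
    constructor <;> simp only [] <;> [linarith; linarith]
  · rw [Real.dist_eq, abs_le]
    have : (0:ℝ) < (1/2)^(k+1) := half_pow_pos _
    constructor <;> simp only [] <;> [linarith; linarith]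


section seqm

variable (u : ℤ → Bool) (w : Bool)

lemma nextEx (inf : ∀ N : ℤ, ∃ n : ℤ, N ≤ n ∧ u n = w) (n : ℤ) :
    ∃ k : ℕ, u (n + 1 + k) = w := by
  obtain ⟨m, hm, hu⟩ := inf (n+1)
  exact ⟨(m - (n+1)).toNat, by rwa [show n + 1 + ((m - (n+1)).toNat : ℤ) = m by omega]⟩

noncomputable def nextPos (inf : ∀ N : ℤ, ∃ n : ℤ, N ≤ n ∧ u n = w) (n : ℤ) : ℤ :=
  n + 1 + Nat.find (nextEx u w inf n)

variable (inf : ∀ N : ℤ, ∃ n : ℤ, N ≤ n ∧ u n = w)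

lemma nextPos_spec (n : ℤ) : u (nextPos u w inf n) = w := Nat.find_spec (nextEx u w inf n)

lemma nextPos_gt (n : ℤ) : n < nextPos u w inf n := by
  have : (0:ℤ) ≤ (Nat.find (nextEx u w inf n) : ℤ) := Int.ofNat_nonneg _
  unfold nextPos; omega

lemma nextPos_min (n m : ℤ) (h1 : n < m) (h2 : m < nextPos u w inf n) : u m = !w := by
  have hk : ((m - (n+1)).toNat : ℤ) = m - (n+1) := by omega
  have hlt : (m - (n+1)).toNat < Nat.find (nextEx u w inf n) := by
    unfold nextPos at h2; omega
  have := Nat.find_min (nextEx u w inf n) hlt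
  have harg : n + 1 + ((m - (n+1)).toNat : ℤ) = m := by omega
  rw [harg] at this
  cases hum : u m <;> cases w <;> simp_all

noncomputable def seqP (base : ℤ) : ℕ → ℤ := fun i => (nextPos u w inf)^[i+1] base

lemma seqP_zero (base : ℤ) : seqP u w inf base 0 = nextPos u w inf base := rfl

lemma seqP_succ (base : ℤ) (i : ℕ) :
    seqP u w inf base (i+1) = nextPos u w inf (seqP u w inf base i) := by
  unfold seqP
  rw [Function.iterate_succ_apply']

lemma seqP_spec (base : ℤ) (i : ℕ) : u (seqP u w inf base i) = w := by
  cases i with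
  | zero => rw [seqP_zero]; exact nextPos_spec u w inf base
  | succ i => rw [seqP_succ]; exact nextPos_spec u w inf _

lemma seqP_lt (base : ℤ) (i : ℕ) : seqP u w inf base i < seqP u w inf base (i+1) := by
  rw [seqP_succ]; exact nextPos_gt u w inf _

lemma seqP_base_lt (base : ℤ) (i : ℕ) : base < seqP u w inf base i := by
  induction i with
  | zero => exact nextPos_gt u w inf base
  | succ i ih => exact lt_trans ih (seqP_lt u w inf base i)

lemma seqP_between (base : ℤ) (i : ℕ) (m : ℤ)
    (h1 : seqP u w inf base i < m) (h2 : m < seqP u w inf base (i+1)) : u m = !w := by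
  rw [seqP_succ] at h2
  exact nextPos_min u w inf _ m h1 h2

lemma seqP_mono (base : ℤ) : StrictMono (seqP u w inf base) :=
  strictMono_nat_of_lt_succ (seqP_lt u w inf base)

end seqm

/-- a monotone bounded ℕ-sequence is eventually constant -/
lemma ev_const (B : ℕ) (f : ℕ → ℕ) (mono : ∀ i, f i ≤ f (i+1)) (hB : ∀ i, f i ≤ B) :
    ∃ i₀, ∀ i, i₀ ≤ i → f i = f i₀ := by
  induction B with
  | zero => exact ⟨0, fun i _ => by have := hB i; have := hB 0; omega⟩
  | succ B ih =>
    by_cases hc : ∃ i, f i = B + 1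
    · obtain ⟨i₁, hi₁⟩ := hc
      refine ⟨i₁, fun i hi => ?_⟩
      have hm : f i₁ ≤ f i := monotone_nat_of_le_succ mono hi
      have := hB i
      omega
    · push_neg at hc
      exact ih (fun i => by have := hB i; have := hc i; omega)

/-- an antitone ℕ-sequence is eventually constant -/
lemma ev_const_anti (f : ℕ → ℕ) (anti : ∀ i, f (i+1) ≤ f i) :
    ∃ i₀, ∀ i, i₀ ≤ i → f i = f i₀ := by
  have hmono : ∀ i, f 0 - f i ≤ f 0 - f (i+1) := fun i => Nat.sub_le_sub_left (anti i) (f 0)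
  have hle : ∀ i, f i ≤ f 0 := fun i => by
    induction i with
    | zero => exact le_refl _
    | succ i ih => exact le_trans (anti i) ih
  obtain ⟨i₀, hi₀⟩ := ev_const (f 0) (fun i => f 0 - f i) hmono (fun i => Nat.sub_le _ _)
  refine ⟨i₀, fun i hi => ?_⟩
  have := hi₀ i hi
  have h1 := hle i
  have h2 := hle i₀
  omega

lemma locate (s : ℕ → ℤ) (hs : ∀ i, s i < s (i+1)) (i₀ : ℕ) :
    ∀ n : ℤ, s i₀ ≤ n → ∃ j, i₀ ≤ j ∧ s j ≤ n ∧ n < s (j+1) := by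
  refine Int.le_induction ⟨i₀, le_refl _, le_refl _, hs i₀⟩ ?_
  intro n hn ih
  · obtain ⟨j, hj, hj1, hj2⟩ := ih
    by_cases h : n + 1 < s (j+1)
    · exact ⟨j, hj, by omega, h⟩
    · have he : s (j+1) = n + 1 := by omega
      exact ⟨j+1, by omega, by omega, by rw [← he] at *; exact hs (j+1)⟩

lemma periodic_of_markers (u : ℤ → Bool) (w : Bool) (s : ℕ → ℤ) (p : ℕ) (hp : 1 ≤ p) (i₀ : ℕ)
    (hs : ∀ i, s i < s (i+1))
    (hstep : ∀ j, i₀ ≤ j → s (j+1) = s j + p)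
    (hmark : ∀ j, u (s j) = w)
    (hbetween : ∀ j (m : ℤ), s j < m → m < s (j+1) → u m = (!w)) :
    ∀ n : ℤ, s i₀ ≤ n → u (n + p) = u n := by
  intro n hn
  obtain ⟨j, hj, hj1, hj2⟩ := locate s hs i₀ n hn
  have hs1 : s (j+1) = s j + p := hstep j hj
  have hs2 : s (j+1+1) = s (j+1) + p := hstep (j+1) (by omega)
  rcases eq_or_lt_of_le hj1 with heq | hlt
  · have h1 : u n = w := heq ▸ hmark j
    have h2 : u (n + p) = w := by
      have : n + p = s (j+1) := by omega
      rw [this]; exact hmark (j+1)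
    rw [h1, h2]
  · have h1 : u n = !w := hbetween j n hlt hj2
    have h2 : u (n + p) = !w := by
      apply hbetween (j+1) <;> omega
    rw [h1, h2]


lemma mainR (u : ℤ → Bool) (hav : ∀ n : ℤ, pibar (shiftIter n u) ∉ Delta) :
    (∃ p : ℕ, 1 ≤ p ∧ ∃ N : ℤ, ∀ n : ℤ, N ≤ n → u (n + p) = u n) ∨
    (∀ ε : ℝ, 0 < ε → ∃ n : ℤ,
      dist (pibar (shiftIter n u)) ((0 : ℝ), (1/2 : ℝ)) < ε ∨
      dist (pibar (shiftIter n u)) ((1/2 : ℝ), (1 : ℝ)) < ε) := by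
  by_cases hT0 : ∃ N : ℤ, ∀ n : ℤ, N ≤ n → u n = false
  · obtain ⟨N, hN⟩ := hT0
    exact Or.inl ⟨1, le_refl 1, N, fun n hn => by
      rw [hN n hn, hN (n+(1:ℕ)) (by omega)]⟩
  by_cases hT1 : ∃ N : ℤ, ∀ n : ℤ, N ≤ n → u n = true
  · obtain ⟨N, hN⟩ := hT1
    exact Or.inl ⟨1, le_refl 1, N, fun n hn => by
      rw [hN n hn, hN (n+(1:ℕ)) (by omega)]⟩
  push_neg at hT0 hT1
  have H1 : ∀ N : ℤ, ∃ n : ℤ, N ≤ n ∧ u n = true := by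
    intro N
    obtain ⟨n, hn, hun⟩ := hT0 N
    refine ⟨n, hn, ?_⟩
    revert hun; cases u n <;> simp
  have H0 : ∀ N : ℤ, ∃ n : ℤ, N ≤ n ∧ u n = false := by
    intro N
    obtain ⟨n, hn, hun⟩ := hT1 N
    refine ⟨n, hn, ?_⟩
    revert hun; cases u n <;> simp
  obtain ⟨f₀, hf₀ge, hf₀⟩ := H0 0
  by_cases hC00 : ∀ N : ℤ, ∃ n : ℤ, N ≤ n ∧ u n = false ∧ u (n+1) = false
  -- ===================== gap case =====================
  · set s := seqP u true H1 f₀ with hsdef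
    have smono : ∀ i, s i < s (i+1) := seqP_lt u true H1 f₀
    have sspec : ∀ i, u (s i) = true := seqP_spec u true H1 f₀
    have sbetween : ∀ i (m : ℤ), s i < m → m < s (i+1) → u m = false := by
      intro i m h1 h2
      have := seqP_between u true H1 f₀ i m h1 h2
      simpa using this
    have sbase : ∀ i, f₀ < s i := seqP_base_lt u true H1 f₀
    set gs : ℕ → ℕ := fun i => (s (i+1) - s i).toNat with hgsdef
    have gs_cast : ∀ i, ((gs i : ℕ) : ℤ) = s (i+1) - s i := by
      intro i; have := smono i; simp only [hgsdef]; omega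
    have gs_pos : ∀ i, 1 ≤ gs i := by
      intro i; have := smono i; have := gs_cast i; omega
    have key : ∀ i, 3 ≤ gs (i+1) → gs (i+1) ≤ gs i := by
      intro i h3
      apply lemG u hav (s (i+1)) (gs (i+1)) (gs i) h3 (gs_pos i) (sspec (i+1))
      · intro j hj1 hjg
        apply sbetween (i+1)
        · omega
        · have h1 := gs_cast (i+1)
          have h2 : (j : ℤ) < (gs (i+1) : ℤ) := by exact_mod_cast hjg
          omega
      · have h1 := gs_cast (i+1)
        have harg : s (i+1) + ((gs (i+1) : ℕ) : ℤ) = s (i+1+1) := by omega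
        rw [harg]; exact sspec (i+1+1)
      · intro j hj1 hjd
        apply sbetween i
        · have h1 := gs_cast i
          have h2 : (j : ℤ) < (gs i : ℤ) := by exact_mod_cast hjd
          omega
        · omega
      · have h1 := gs_cast i
        have harg : s (i+1) - ((gs i : ℕ) : ℤ) = s i := by omega
        rw [harg]; exact sspec i
      · obtain ⟨c, hc, hcf⟩ := H0 (s (i+1) + gs (i+1) + 1)
        exact ⟨c, by omega, hcf⟩
      · exact ⟨f₀, sbase (i+1), hf₀⟩
    have all3 : ∀ i, 3 ≤ gs i := by
      by_contra hall
      push_neg at hall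
      obtain ⟨i, hi⟩ := hall
      have prop : ∀ j, gs (i + j) ≤ 2 := by
        intro j
        induction j with
        | zero => rw [Nat.add_zero]; omega
        | succ j ih =>
          by_contra h3
          push_neg at h3
          rw [show i + (j+1) = (i+j)+1 from by omega] at h3
          have hk := key (i+j) (by omega)
          omega
      obtain ⟨n, hn, hn0, hn1⟩ := hC00 (s i)
      obtain ⟨j, hj, hj1, hj2⟩ := locate s smono i n hn
      have hsj : s j < n := by
        rcases eq_or_lt_of_le hj1 with he | hl
        · rw [← he] at hn0; rw [sspec j] at hn0; simp at hn0
        · exact hl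
      have hgj : gs j ≤ 2 := by
        have hp := prop (j - i)
        have : i + (j - i) = j := by omega
        rwa [this] at hp
      have hgc := gs_cast j
      have hne : n + 1 = s (j+1) := by omega
      rw [hne] at hn1
      rw [sspec (j+1)] at hn1
      simp at hn1
    have anti : ∀ i, gs (i+1) ≤ gs i := fun i => key i (all3 (i+1))
    obtain ⟨i₀, hconst⟩ := ev_const_anti gs anti
    left
    refine ⟨gs i₀, gs_pos i₀, s i₀, ?_⟩
    apply periodic_of_markers u true s (gs i₀) (gs_pos i₀) i₀ smono
    · intro j hj
      have h1 := gs_cast j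
      have h2 := hconst j hj
      omega
    · exact sspec
    · intro j m h1 h2
      have := sbetween j m h1 h2
      simpa using this
  -- ===================== run case =====================
  · push_neg at hC00
    obtain ⟨N₀, hN₀⟩ := hC00
    have iso : ∀ n : ℤ, N₀ ≤ n → u n = false → u (n+1) = true := by
      intro n hn h
      have := hN₀ n hn
      revert this h
      cases u n <;> cases u (n+1) <;> simp
    set s := seqP u false H0 N₀ with hsdef
    have smono : ∀ i, s i < s (i+1) := seqP_lt u false H0 N₀
    have sspec : ∀ i, u (s i) = false := seqP_spec u false H0 N₀
    have sbetween : ∀ i (m : ℤ), s i < m → m < s (i+1) → u m = true := by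
      intro i m h1 h2
      have := seqP_between u false H0 N₀ i m h1 h2
      simpa using this
    have sbase : ∀ i, N₀ < s i := seqP_base_lt u false H0 N₀
    have sgap2 : ∀ i, s i + 2 ≤ s (i+1) := by
      intro i
      have hiso := iso (s i) (le_of_lt (sbase i)) (sspec i)
      have := smono i
      by_contra hcc
      push_neg at hcc
      have he : s (i+1) = s i + 1 := by omega
      rw [← he, sspec (i+1)] at hiso
      simp at hiso
    set hs : ℕ → ℕ := fun i => (s (i+1) - s i - 1).toNat with hhsdef
    have hs_cast : ∀ i, ((hs i : ℕ) : ℤ) = s (i+1) - s i - 1 := by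
      intro i; have := smono i; simp only [hhsdef]; omega
    have hs_pos : ∀ i, 1 ≤ hs i := by
      intro i; have := sgap2 i; have := hs_cast i; omega
    have mono : ∀ i, hs i ≤ hs (i+1) := by
      intro i
      by_cases h2 : 2 ≤ hs i
      swap
      · have := hs_pos (i+1); omega
      · apply lemH u hav (s (i+1) - 1) (hs i) (hs (i+1)) h2 (hs_pos (i+1))
        · intro j hj
          apply sbetween i
          · have h1 := hs_cast i
            have hc : (j : ℤ) < (hs i : ℤ) := by exact_mod_cast hj
            omega
          · omega
        · have h1 := hs_cast i
          have harg : s (i+1) - 1 - ((hs i : ℕ) : ℤ) = s i := by omega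
          rw [harg]; exact sspec i
        · have harg : s (i+1) - 1 + 1 = s (i+1) := by omega
          rw [harg]; exact sspec (i+1)
        · intro j hj1 hj2
          apply sbetween (i+1)
          · omega
          · have h1 := hs_cast (i+1)
            have hc : (j : ℤ) ≤ (hs (i+1) : ℤ) := by exact_mod_cast hj2
            omega
        · have h1 := hs_cast (i+1)
          have harg : s (i+1) - 1 + 2 + ((hs (i+1) : ℕ) : ℤ) = s (i+1+1) := by omega
          rw [harg]; exact sspec (i+1+1)
        · refine ⟨s (i+1+1+1), ?_, sspec (i+1+1+1)⟩
          have h1 := hs_cast (i+1)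
          have h2 := smono (i+1+1)
          omega
    by_cases hbd : ∃ B, ∀ i, hs i ≤ B
    · obtain ⟨B, hB⟩ := hbd
      obtain ⟨i₀, hconst⟩ := ev_const B hs mono hB
      left
      refine ⟨hs i₀ + 1, by omega, s i₀, ?_⟩
      apply periodic_of_markers u false s (hs i₀ + 1) (by omega) i₀ smono
      · intro j hj
        have h1 := hs_cast j
        have h2 := hconst j hj
        have h3 : ((hs i₀ + 1 : ℕ) : ℤ) = (hs i₀ : ℤ) + 1 := by push_cast; ring
        omega
      · exact sspec
      · intro j m h1 h2
        have := sbetween j m h1 h2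
        simpa using this
    · right
      intro ε hε
      push_neg at hbd
      obtain ⟨k, hk⟩ := exists_pow_lt_of_lt_one hε (by norm_num : (1:ℝ)/2 < 1)
      obtain ⟨i, hi⟩ := hbd k
      have hii : k + 1 ≤ hs i := hi
      have hii2 : k ≤ hs (i+1) := le_trans (by omega) (mono i)
      refine ⟨s (i+1) - 1, Or.inr ?_⟩
      have hdist := lemC2 u (s (i+1) - 1) k ?_ ?_ ?_
      · calc dist (pibar (shiftIter (s (i+1) - 1) u)) ((1:ℝ)/2, (1:ℝ)) ≤ (1/2)^(k+1) := hdist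
        _ ≤ (1/2)^k := pow_half_anti (by omega)
        _ < ε := hk
      · intro j hj
        apply sbetween i
        · have h1 := hs_cast i
          have hc : (j : ℤ) ≤ (k : ℤ) := by exact_mod_cast hj
          have hc2 : ((k:ℕ) : ℤ) + 1 ≤ (hs i : ℤ) := by exact_mod_cast hii
          omega
        · omega
      · have harg : s (i+1) - 1 + 1 = s (i+1) := by omega
        rw [harg]; exact sspec (i+1)
      · intro j hj1 hj2
        apply sbetween (i+1)
        · omega
        · have h1 := hs_cast (i+1)
          have hc : (j : ℤ) ≤ (k : ℤ) := by exact_mod_cast hj2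
          have hc2 : ((k:ℕ) : ℤ) ≤ (hs (i+1) : ℤ) := by exact_mod_cast hii2
          omega


lemma val_congr (b c : ℕ → Bool) (h : ∀ k, b k = c k) : val b = val c := by
  unfold val
  exact tsum_congr (fun n => by rw [h n])

lemma pibar_rev (u : ℤ → Bool) (n : ℤ) :
    pibar (shiftIter n (fun m => !u (1 - m))) =
      (1 - (pibar (shiftIter (-n) u)).2, 1 - (pibar (shiftIter (-n) u)).1) := by
  rw [pibar_eq, pibar_eq]
  simp only [Prod.mk.injEq]
  constructor
  · rw [← val_not]
    apply val_congr
    intro k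
    show (!u (1 - (n + 1 + k))) = !u (-n - k)
    have : (1:ℤ) - (n + 1 + k) = -n - k := by ring
    rw [this]
  · rw [← val_not]
    apply val_congr
    intro k
    show (!u (1 - (n - k))) = !u (-n + 1 + k)
    have : (1:ℤ) - (n - k) = -n + 1 + k := by ring
    rw [this]

lemma delta_rev (p : ℝ × ℝ) : ((1 - p.2, 1 - p.1) : ℝ × ℝ) ∈ Delta ↔ p ∈ Delta := by
  unfold Delta
  simp only [Set.mem_setOf_eq]
  constructor <;> rintro ⟨h1, h2, h3, h4⟩ <;>
    exact ⟨by linarith, by linarith, by linarith, by linarith⟩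

lemma dist_rev1 (q : ℝ × ℝ) :
    dist ((1 - q.2, 1 - q.1) : ℝ × ℝ) ((0:ℝ), (1/2:ℝ)) = dist q ((1/2:ℝ), (1:ℝ)) := by
  rw [Prod.dist_eq, Prod.dist_eq, max_comm]
  simp only [Real.dist_eq]
  congr 1
  · rw [abs_sub_comm]; congr 1; ring
  · rw [abs_sub_comm]; congr 1; ring

lemma dist_rev2 (q : ℝ × ℝ) :
    dist ((1 - q.2, 1 - q.1) : ℝ × ℝ) ((1/2:ℝ), (1:ℝ)) = dist q ((0:ℝ), (1/2:ℝ)) := by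
  rw [Prod.dist_eq, Prod.dist_eq, max_comm]
  simp only [Real.dist_eq]
  congr 1
  · rw [abs_sub_comm]; congr 1; ring
  · rw [abs_sub_comm]; congr 1; ring

/-- If the coded orbit of `u` avoids `Δ`, then `u` is eventually periodic
in both directions, or its coded orbit comes arbitrarily close to `(0,1/2)` or `(1/2,1)`. -/
theorem avoid_Delta_eventually_periodic_or_close (u : ℤ → Bool)
    (havoid : ∀ n : ℤ, pibar (shiftIter n u) ∉ Delta) :
    ((∃ p : ℕ, 1 ≤ p ∧ ∃ N : ℤ, ∀ n : ℤ, N ≤ n → u (n + p) = u n) ∧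
      (∃ q : ℕ, 1 ≤ q ∧ ∃ M : ℤ, ∀ n : ℤ, n ≤ M → u (n - q) = u n)) ∨
    (∀ ε : ℝ, 0 < ε → ∃ n : ℤ,
      dist (pibar (shiftIter n u)) ((0 : ℝ), (1/2 : ℝ)) < ε ∨
      dist (pibar (shiftIter n u)) ((1/2 : ℝ), (1 : ℝ)) < ε) := by
  have hav_v : ∀ n : ℤ, pibar (shiftIter n (fun m => !u (1 - m))) ∉ Delta := by
    intro n h
    rw [pibar_rev] at h
    exact havoid (-n) ((delta_rev _).mp h)
  rcases mainR u havoid with hR | hC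
  · rcases mainR (fun m => !u (1 - m)) hav_v with hL | hCv
    · left
      refine ⟨hR, ?_⟩
      obtain ⟨p, hp, N, hper⟩ := hL
      refine ⟨p, hp, 1 - N, ?_⟩
      intro n hn
      have hh := hper (1 - n) (by omega)
      have harg1 : (1:ℤ) - (1 - n + p) = n - p := by ring
      have harg2 : (1:ℤ) - (1 - n) = n := by ring
      rw [harg1, harg2] at hh
      revert hh
      cases u (n - p) <;> cases u n <;> simp
    · right
      intro ε hε
      obtain ⟨n, hn⟩ := hCv ε hε
      refine ⟨-n, ?_⟩
      rw [pibar_rev] at hn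
      rcases hn with h | h
      · right; rwa [dist_rev1] at h
      · left; rwa [dist_rev2] at h
  · exact Or.inr hC

end
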